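/- If G is the join of graphs G_1 and G_2, each with at least one vertex, then the maximum size of an induced matching in G equals max(iν(G_1), iν(G_2), 1), where iν denotes the maximum induced matching size. -/

import Mathlib

open SimpleGraph

/-- The square of a graph: same vertices, adjacency iff distance 1 or 2. -/
def SimpleGraph.square {V : Type*} (G : SimpleGraph V) : SimpleGraph V where
  Adj u v := u ≠ v ∧ (G.Adj u v ∨ ∃ w, G.Adj u w ∧ G.Adj w v)
  symm := ⟨by
    rintro u v ⟨h, h' | ⟨w, hw1, hw2⟩⟩
    · exact ⟨h.symm, Or.inl h'.symm⟩
    · exact ⟨h.symm, Or.inr ⟨w, hw2.symm, hw1.symm⟩⟩⟩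
  loopless := ⟨fun v h => h.1 rfl⟩

/-- `G` has an induced cycle of length `n`. -/
def SimpleGraph.HasInducedCycle {V : Type*} (G : SimpleGraph V) (n : ℕ) : Prop :=
  Nonempty (cycleGraph n ↪g G)

/-- A graph is chordal if it has no induced cycle of length at least 4. -/
def SimpleGraph.Chordal {V : Type*} (G : SimpleGraph V) : Prop :=
  ∀ n, 4 ≤ n → ¬ G.HasInducedCycle n

/-- The join of two graphs: their disjoint union with all cross edges added. -/
def SimpleGraph.join {α β : Type*} (G : SimpleGraph α) (H : SimpleGraph β) :
    SimpleGraph (α ⊕ β) where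
  Adj x y := match x, y with
    | Sum.inl a, Sum.inl b => G.Adj a b
    | Sum.inr a, Sum.inr b => H.Adj a b
    | _, _ => True
  symm := ⟨by rintro (a | a) (b | b) h <;> first | exact h.symm | trivial⟩
  loopless := ⟨by rintro (a | a) h <;> exact h.ne rfl⟩

/-- An edge of the join with one endpoint on each side. -/
def crossEdge {α β : Type*} (e : Sym2 (α ⊕ β)) : Prop :=
  ∃ a b, e = s(Sum.inl a, Sum.inr b)

/-- M is an induced matching of G. -/
def IsInducedMatching {α : Type*} (G : SimpleGraph α) (M : Set (Sym2 α)) : Prop :=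
  M ⊆ G.edgeSet ∧
    ∀ e ∈ M, ∀ f ∈ M, e ≠ f → ∀ u ∈ e, ∀ v ∈ f, u ≠ v ∧ ¬ G.Adj u v

/-- The maximum size of an induced matching. -/
noncomputable def indMatchNum {α : Type*} (G : SimpleGraph α) : ℕ :=
  sSup {n | ∃ M : Set (Sym2 α), IsInducedMatching G M ∧ M.Finite ∧ M.ncard = n}

/-- For the join of two nonempty graphs,
$iν(G) = \max(iν(G₁), iν(G₂), 1)$. -/

lemma isInducedMatching_empty {α : Type*} (G : SimpleGraph α) : IsInducedMatching G ∅ :=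
  ⟨Set.empty_subset _, fun e he => absurd he (Set.notMem_empty e)⟩

lemma indMatch_set_nonempty {α : Type*} (G : SimpleGraph α) :
    {n | ∃ M : Set (Sym2 α), IsInducedMatching G M ∧ M.Finite ∧ M.ncard = n}.Nonempty :=
  ⟨0, ∅, isInducedMatching_empty G, Set.finite_empty, Set.ncard_empty _⟩

lemma indMatch_set_bddAbove {α : Type*} [Fintype α] (G : SimpleGraph α) :
    BddAbove {n | ∃ M : Set (Sym2 α), IsInducedMatching G M ∧ M.Finite ∧ M.ncard = n} := by
  refine ⟨Nat.card (Sym2 α), ?_⟩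
  rintro n ⟨M, _, _, rfl⟩
  simpa [Set.ncard_univ] using Set.ncard_le_ncard (Set.subset_univ M) Set.finite_univ

lemma IsInducedMatching.map_push {α γ : Type*} {G : SimpleGraph α} {H : SimpleGraph γ}
    {f : α → γ} (hf : Function.Injective f)
    (hadj : ∀ a b, H.Adj (f a) (f b) ↔ G.Adj a b)
    {M : Set (Sym2 α)} (hM : IsInducedMatching G M) :
    IsInducedMatching H (Sym2.map f '' M) := by
  constructor
  · rintro e ⟨e', he', rfl⟩
    revert he'
    induction e' using Sym2.ind with
    | _ a b =>
      intro he'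
      have := hM.1 he'
      rw [SimpleGraph.mem_edgeSet] at this
      rw [Sym2.map_pair_eq, SimpleGraph.mem_edgeSet]
      exact (hadj a b).2 this
  · rintro e ⟨e', he', rfl⟩ g ⟨g', hg', rfl⟩ hne u hu v hv
    have hne' : e' ≠ g' := fun h => hne (by rw [h])
    obtain ⟨a, ha, rfl⟩ := Sym2.mem_map.1 hu
    obtain ⟨b, hb, rfl⟩ := Sym2.mem_map.1 hv
    obtain ⟨h1, h2⟩ := hM.2 e' he' g' hg' hne' a ha b hb
    exact ⟨fun h => h1 (hf h), fun h => h2 ((hadj a b).1 h)⟩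

lemma pull_le {α γ : Type*} [Fintype α] {G : SimpleGraph α} {H : SimpleGraph γ}
    {f : α → γ} (hf : Function.Injective f)
    (hadj : ∀ a b, H.Adj (f a) (f b) ↔ G.Adj a b)
    {M : Set (Sym2 γ)} (hM : IsInducedMatching H M)
    (hrange : ∀ e ∈ M, ∀ x ∈ e, ∃ a, x = f a) :
    M.ncard ≤ indMatchNum G := by
  set M₁ : Set (Sym2 α) := {e | Sym2.map f e ∈ M} with hM₁def
  have himg : Sym2.map f '' M₁ = M := by
    apply Set.Subset.antisymm
    · rintro e ⟨e', he', rfl⟩; exact he'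
    · intro e he
      revert he
      induction e using Sym2.ind with
      | _ x y =>
        intro he
        obtain ⟨a, rfl⟩ := hrange _ he x (by simp)
        obtain ⟨b, rfl⟩ := hrange _ he y (by simp)
        exact ⟨s(a, b), by simpa [M₁] using he, by simp⟩
  have hinj : Function.Injective (Sym2.map f) := Sym2.map.injective hf
  have hcard : M.ncard = M₁.ncard := by
    rw [← himg, Set.ncard_image_of_injective _ hinj]
  rw [hcard]
  apply le_csSup (indMatch_set_bddAbove G)
  refine ⟨M₁, ⟨?_, ?_⟩, Set.toFinite _, rfl⟩
  · intro e he
    revert he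
    induction e using Sym2.ind with
    | _ a b =>
      intro he
      have h2 := hM.1 he
      rw [Sym2.map_pair_eq, SimpleGraph.mem_edgeSet] at h2
      rw [SimpleGraph.mem_edgeSet]
      exact (hadj a b).1 h2
  · intro e he g hg hne u hu v hv
    have hne' : Sym2.map f e ≠ Sym2.map f g := fun h => hne (hinj h)
    obtain ⟨h1, h2⟩ := hM.2 _ he _ hg hne' (f u) (Sym2.mem_map.2 ⟨u, hu, rfl⟩)
      (f v) (Sym2.mem_map.2 ⟨v, hv, rfl⟩)
    exact ⟨fun h => h1 (congrArg f h), fun h => h2 ((hadj u v).2 h)⟩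


theorem indMatchNum_join {α β : Type*} [Fintype α] [Fintype β]
    [Nonempty α] [Nonempty β] (G₁ : SimpleGraph α) (G₂ : SimpleGraph β) :
    indMatchNum (G₁.join G₂) = max (max (indMatchNum G₁) (indMatchNum G₂)) 1 := by
  classical
  apply le_antisymm
  · apply csSup_le (indMatch_set_nonempty _)
    rintro n ⟨M, hM, hfin, rfl⟩
    rcases Set.eq_empty_or_nonempty M with hMe | ⟨e₀, he₀⟩
    · simp [hMe]
    revert he₀
    induction e₀ using Sym2.ind with
    | _ x y =>
      intro he₀
      have hcrossL : ∀ a b, s(Sum.inl a, Sum.inr b) ∈ M → M.ncard ≤ 1 := by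
        intro a b hab
        have hsing : M = {s(Sum.inl a, Sum.inr b)} := by
          rw [Set.eq_singleton_iff_unique_mem]
          refine ⟨hab, fun g hg => ?_⟩
          by_contra hne
          revert hg hne
          induction g using Sym2.ind with
          | _ u v =>
            intro hg hne
            rcases u with c | c
            · have := (hM.2 _ hab _ hg (fun h => hne h.symm) (Sum.inr b)
                (by simp) (Sum.inl c) (by simp)).2
              exact this trivial
            · have := (hM.2 _ hab _ hg (fun h => hne h.symm) (Sum.inl a)
                (by simp) (Sum.inr c) (by simp)).2
              exact this trivial
        rw [hsing, Set.ncard_singleton]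
      rcases x with a | a <;> rcases y with b | b
      · -- both left
        have hleft : ∀ e ∈ M, ∀ x ∈ e, ∃ c, x = Sum.inl c := by
          intro g hg x hx
          rcases x with c | c
          · exact ⟨c, rfl⟩
          exfalso
          have hne : s(Sum.inl a, Sum.inl b) ≠ g := by
            intro h
            rw [← h, Sym2.mem_iff] at hx
            rcases hx with hx | hx <;> cases hx
          have := (hM.2 _ he₀ _ hg hne (Sum.inl a) (by simp) (Sum.inr c) hx).2
          exact this trivial
        calc M.ncard ≤ indMatchNum G₁ :=
              pull_le Sum.inl_injective (fun _ _ => Iff.rfl) hM hleft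
          _ ≤ _ := le_max_of_le_left (le_max_left _ _)
      · exact (hcrossL a b he₀).trans (le_max_right _ _)
      · rw [Sym2.eq_swap] at he₀
        exact (hcrossL b a he₀).trans (le_max_right _ _)
      · -- both right
        have hright : ∀ e ∈ M, ∀ x ∈ e, ∃ c, x = Sum.inr c := by
          intro g hg x hx
          rcases x with c | c
          swap
          · exact ⟨c, rfl⟩
          exfalso
          have hne : s(Sum.inr a, Sum.inr b) ≠ g := by
            intro h
            rw [← h, Sym2.mem_iff] at hx
            rcases hx with hx | hx <;> cases hx
          have := (hM.2 _ he₀ _ hg hne (Sum.inr a) (by simp) (Sum.inl c) hx).2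
          exact this trivial
        calc M.ncard ≤ indMatchNum G₂ :=
              pull_le Sum.inr_injective (fun _ _ => Iff.rfl) hM hright
          _ ≤ _ := le_max_of_le_left (le_max_right _ _)
  · apply max_le (max_le ?_ ?_) ?_
    · obtain ⟨M, hM, hfin, hcard⟩ :=
        Nat.sSup_mem (indMatch_set_nonempty G₁) (indMatch_set_bddAbove G₁)
      calc indMatchNum G₁ = (Sym2.map Sum.inl '' M).ncard := by
            rw [Set.ncard_image_of_injective _ (Sym2.map.injective Sum.inl_injective), hcard]; rfl
        _ ≤ _ := le_csSup (indMatch_set_bddAbove _)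
            ⟨_, hM.map_push Sum.inl_injective (fun _ _ => Iff.rfl), hfin.image _, rfl⟩
    · obtain ⟨M, hM, hfin, hcard⟩ :=
        Nat.sSup_mem (indMatch_set_nonempty G₂) (indMatch_set_bddAbove G₂)
      calc indMatchNum G₂ = (Sym2.map Sum.inr '' M).ncard := by
            rw [Set.ncard_image_of_injective _ (Sym2.map.injective Sum.inr_injective), hcard]; rfl
        _ ≤ _ := le_csSup (indMatch_set_bddAbove _)
            ⟨_, hM.map_push Sum.inr_injective (fun _ _ => Iff.rfl), hfin.image _, rfl⟩
    · have a := Classical.arbitrary α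
      have b := Classical.arbitrary β
      refine le_csSup (indMatch_set_bddAbove _)
        ⟨{s(Sum.inl a, Sum.inr b)}, ⟨?_, ?_⟩, Set.finite_singleton _, Set.ncard_singleton _⟩
      · rw [Set.singleton_subset_iff, SimpleGraph.mem_edgeSet]
        trivial
      · intro e he g hg hne
        rw [Set.mem_singleton_iff] at he hg
        exact absurd (he.trans hg.symm) hne
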